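/- Let φ : ℝ² → ℝ be an NCP-function. Then exactly one of the following four alternatives holds: (NCP1) φ(a,b) > 0 for all (a,b) ∈ A ∪ B; (NCP2) φ(a,b) < 0 for all (a,b) ∈ A ∪ B; (NCP3) φ(a,b) < 0 for all (a,b) ∈ A and φ(a,b) > 0 for all (a,b) ∈ B; (NCP4) φ(a,b) > 0 for all (a,b) ∈ A and φ(a,b) < 0 for all (a,b) ∈ B. -/

import Mathlib

/-- Property NCP1: `φ` is positive on `A ∪ B`. -/
def NCP1 (φ : ℝ × ℝ → ℝ) : Prop :=
  ∀ a b : ℝ, (0 < a ∧ 0 < b) ∨ (a < 0 ∨ b < 0) → 0 < φ (a, b)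

/-- Property NCP2: `φ` is negative on `A ∪ B`. -/
def NCP2 (φ : ℝ × ℝ → ℝ) : Prop :=
  ∀ a b : ℝ, (0 < a ∧ 0 < b) ∨ (a < 0 ∨ b < 0) → φ (a, b) < 0

/-- Property NCP3: `φ` is negative on `A` and positive on `B`. -/
def NCP3 (φ : ℝ × ℝ → ℝ) : Prop :=
  (∀ a b : ℝ, 0 < a → 0 < b → φ (a, b) < 0) ∧ (∀ a b : ℝ, a < 0 ∨ b < 0 → 0 < φ (a, b))

/-- Property NCP4: `φ` is positive on `A` and negative on `B`. -/
def NCP4 (φ : ℝ × ℝ → ℝ) : Prop :=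
  (∀ a b : ℝ, 0 < a → 0 < b → 0 < φ (a, b)) ∧ (∀ a b : ℝ, a < 0 ∨ b < 0 → φ (a, b) < 0)

/-- On a preconnected set where a continuous function never vanishes, it has constant sign. -/
lemma same_sign_aux {φ : ℝ × ℝ → ℝ} (hcont : Continuous φ) {s : Set (ℝ × ℝ)}
    (hs : IsPreconnected s) (hnz : ∀ p ∈ s, φ p ≠ 0)
    {p q : ℝ × ℝ} (hp : p ∈ s) (hq : q ∈ s) (hpos : 0 < φ p) : 0 < φ q := by
  by_contra h
  push_neg at h
  have h0 : (0 : ℝ) ∈ Set.Icc (φ q) (φ p) := ⟨h, le_of_lt hpos⟩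
  have := hs.intermediate_value hq hp hcont.continuousOn h0
  obtain ⟨x, hx, hx0⟩ := this
  exact hnz x hx hx0

lemma hfst : IsLinearMap ℝ (Prod.fst : ℝ × ℝ → ℝ) := (LinearMap.fst ℝ ℝ ℝ).isLinear
lemma hsnd : IsLinearMap ℝ (Prod.snd : ℝ × ℝ → ℝ) := (LinearMap.snd ℝ ℝ ℝ).isLinear

lemma convexA : Convex ℝ {p : ℝ × ℝ | 0 < p.1 ∧ 0 < p.2} :=
  (convex_halfSpace_gt hfst 0).inter (convex_halfSpace_gt hsnd 0)

lemma preconnA : IsPreconnected {p : ℝ × ℝ | 0 < p.1 ∧ 0 < p.2} :=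
  convexA.isPreconnected

lemma preconnB : IsPreconnected {p : ℝ × ℝ | p.1 < 0 ∨ p.2 < 0} := by
  have : {p : ℝ × ℝ | p.1 < 0 ∨ p.2 < 0}
      = {p : ℝ × ℝ | p.1 < 0} ∪ {p : ℝ × ℝ | p.2 < 0} := rfl
  rw [this]
  exact IsPreconnected.union ((-1, -1) : ℝ × ℝ) (by norm_num) (by norm_num)
    (convex_halfSpace_lt hfst 0).isPreconnected (convex_halfSpace_lt hsnd 0).isPreconnected

/-- Every NCP-function has precisely one of the properties NCP1, NCP2, NCP3, NCP4. -/
theorem ncp_four_alternatives (φ : ℝ × ℝ → ℝ) (hcont : Continuous φ)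
    (hncp : ∀ a b : ℝ, φ (a, b) = 0 ↔ 0 ≤ a ∧ 0 ≤ b ∧ a * b = 0) :
    (NCP1 φ ∨ NCP2 φ ∨ NCP3 φ ∨ NCP4 φ) ∧
    ¬(NCP1 φ ∧ NCP2 φ) ∧ ¬(NCP1 φ ∧ NCP3 φ) ∧ ¬(NCP1 φ ∧ NCP4 φ) ∧
    ¬(NCP2 φ ∧ NCP3 φ) ∧ ¬(NCP2 φ ∧ NCP4 φ) ∧ ¬(NCP3 φ ∧ NCP4 φ) := by
  have hnzA : ∀ p ∈ {p : ℝ × ℝ | 0 < p.1 ∧ 0 < p.2}, φ p ≠ 0 := by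
    rintro ⟨a, b⟩ ⟨ha, hb⟩ h0
    obtain ⟨_, _, hab⟩ := (hncp a b).1 h0
    nlinarith
  have hnzB : ∀ p ∈ {p : ℝ × ℝ | p.1 < 0 ∨ p.2 < 0}, φ p ≠ 0 := by
    rintro ⟨a, b⟩ hp h0
    obtain ⟨ha, hb, _⟩ := (hncp a b).1 h0
    rcases hp with h | h <;> simp at h <;> linarith
  -- constant sign lemmas
  have signA : ∀ {a b c d : ℝ}, 0 < a → 0 < b → 0 < c → 0 < d →
      0 < φ (a, b) → 0 < φ (c, d) := fun {a b c d} ha hb hc hd hpos =>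
    same_sign_aux hcont preconnA hnzA ⟨ha, hb⟩ ⟨hc, hd⟩ hpos
  have signB : ∀ {a b c d : ℝ}, (a < 0 ∨ b < 0) → (c < 0 ∨ d < 0) →
      0 < φ (a, b) → 0 < φ (c, d) := fun {a b c d} h1 h2 hpos =>
    same_sign_aux hcont preconnB hnzB h1 h2 hpos
  have h11 : φ (1, 1) ≠ 0 := hnzA (1, 1) (by norm_num)
  have hmm : φ (-1, -1) ≠ 0 := hnzB (-1, -1) (by norm_num)
  constructor
  · rcases h11.lt_or_gt with hA | hA <;> rcases hmm.lt_or_gt with hB | hB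
    · -- φ(1,1)<0, φ(-1,-1)<0 : NCP2
      refine Or.inr (Or.inl ?_)
      intro a b h
      by_contra hle
      push_neg at hle
      have hpos : 0 < φ (a, b) := by
        rcases lt_or_eq_of_le hle with h' | h'
        · exact h'
        · exfalso
          rcases h with ⟨ha, hb⟩ | hB'
          · exact hnzA (a, b) ⟨ha, hb⟩ h'.symm
          · exact hnzB (a, b) hB' h'.symm
      rcases h with ⟨ha, hb⟩ | hB'
      · exact absurd (signA ha hb one_pos one_pos hpos) (not_lt.2 (le_of_lt hA))
      · exact absurd (signB hB' (Or.inl (by norm_num)) hpos) (not_lt.2 (le_of_lt hB))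
    · -- φ(1,1)<0, φ(-1,-1)>0 : NCP3
      refine Or.inr (Or.inr (Or.inl ⟨?_, ?_⟩))
      · intro a b ha hb
        by_contra hle
        push_neg at hle
        have hpos : 0 < φ (a, b) := lt_of_le_of_ne hle (fun h => hnzA (a, b) ⟨ha, hb⟩ h.symm)
        exact absurd (signA ha hb one_pos one_pos hpos) (not_lt.2 (le_of_lt hA))
      · intro a b h
        exact signB (Or.inl (by norm_num)) h hB
    · -- φ(1,1)>0, φ(-1,-1)<0 : NCP4
      refine Or.inr (Or.inr (Or.inr ⟨?_, ?_⟩))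
      · intro a b ha hb
        exact signA one_pos one_pos ha hb hA
      · intro a b h
        by_contra hle
        push_neg at hle
        have hpos : 0 < φ (a, b) := lt_of_le_of_ne hle (fun h' => hnzB (a, b) h h'.symm)
        exact absurd (signB h (Or.inl (by norm_num)) hpos) (not_lt.2 (le_of_lt hB))
    · -- both positive : NCP1
      refine Or.inl ?_
      intro a b h
      rcases h with ⟨ha, hb⟩ | hB'
      · exact signA one_pos one_pos ha hb hA
      · exact signB (Or.inl (by norm_num)) hB' hB
  · refine ⟨?_, ?_, ?_, ?_, ?_, ?_⟩
    · rintro ⟨h1, h2⟩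
      exact absurd (h1 1 1 (Or.inl ⟨one_pos, one_pos⟩)) (not_lt.2 (le_of_lt (h2 1 1 (Or.inl ⟨one_pos, one_pos⟩))))
    · rintro ⟨h1, h3⟩
      exact absurd (h1 1 1 (Or.inl ⟨one_pos, one_pos⟩)) (not_lt.2 (le_of_lt (h3.1 1 1 one_pos one_pos)))
    · rintro ⟨h1, h4⟩
      exact absurd (h1 (-1) (-1) (Or.inr (Or.inl (by norm_num)))) (not_lt.2 (le_of_lt (h4.2 (-1) (-1) (Or.inl (by norm_num)))))
    · rintro ⟨h2, h3⟩
      exact absurd (h3.2 (-1) (-1) (Or.inl (by norm_num))) (not_lt.2 (le_of_lt (h2 (-1) (-1) (Or.inr (Or.inl (by norm_num))))))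
    · rintro ⟨h2, h4⟩
      exact absurd (h4.1 1 1 one_pos one_pos) (not_lt.2 (le_of_lt (h2 1 1 (Or.inl ⟨one_pos, one_pos⟩))))
    · rintro ⟨h3, h4⟩
      exact absurd (h4.1 1 1 one_pos one_pos) (not_lt.2 (le_of_lt (h3.1 1 1 one_pos one_pos)))
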